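/- arXiv:2212.13190 — 11 statements merged into one kernel-verified Lean document; each statement's English description precedes it below -/
import Mathlib

section
/- Let Θ, Θ' : G → Aut(K) be group homomorphisms, let α be a normalized 2-cocycle stabilized by Θ(G) and α' a normalized 2-cocycle stabilized by Θ'(G), let δ : G → G be a bijection and κ : G → K^* a map with κ(1) = 1. Then the K-left-linear bijection Ψ : K[G,Θ,α] → K[G,Θ',α'] determined by Ψ(a ḡ) = a·κ(g)·(δ(g))‾ is multiplicative (hence a distance-preserving ring isomorphism) if and only if: (a) δ is a group automorphism of G with Θ(g) = Θ'(δ(g)) for all g ∈ G, and (b) α(g,h) = κ(g)·Θ'(δ(g))(κ(h))·κ(gh)⁻¹·α'(δ(g),δ(h)) for all g,h ∈ G. -/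
open Finset

variable {K : Type*} {G : Type*}

/-- Multiplication of the twisted skew group ring `K[G,Θ,α]`:
`(Σ_g a_g ḡ)·(Σ_h b_h h̄) = Σ_{g,h} a_g·Θ(g)(b_h)·α(g,h)·(gh)‾`. -/
def tsMul [Field K] [Group G] [Fintype G] [DecidableEq G]
    (Θ : G →* RingAut K) (α : G → G → Kˣ) (a b : G → K) : G → K :=
  fun x => ∑ p : G × G, if p.1 * p.2 = x then a p.1 * Θ p.1 (b p.2) * (α p.1 p.2 : K) else 0

/-- The identity element `1̄` of the twisted skew group ring. -/
def tsOne [Field K] [Group G] [DecidableEq G] : (G → K) := fun x => if x = 1 then 1 else 0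

/-- The adjoint map `a ↦ â = Σ_g Θ(g⁻¹)(a_g)·α(g,g⁻¹)·(g⁻¹)‾`. -/
def tsAdj [Field K] [Group G] (Θ : G →* RingAut K) (α : G → G → Kˣ) (a : G → K) : G → K :=
  fun x => Θ x (a x⁻¹) * (α x⁻¹ x : K)

/-- The map `Ψ` determined by `Ψ(a ḡ) = a·κ(g)·(δ(g))‾`. -/
def psiMap [Field K] [Group G] [Fintype G] [DecidableEq G]
    (δ : G → G) (κ : G → Kˣ) (a : G → K) : G → K :=
  fun x => ∑ g : G, if δ g = x then a g * (κ g : K) else 0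

def sg [Field K] [Group G] [DecidableEq G] (g : G) (c : K) : G → K :=
  fun x => if x = g then c else 0

lemma tsMul_sg [Field K] [Group G] [Fintype G] [DecidableEq G]
    (Θ : G →* RingAut K) (α : G → G → Kˣ) (g h : G) (c d : K) :
    tsMul Θ α (sg g c) (sg h d) = sg (g * h) (c * Θ g d * α g h) := by
  funext x
  show (∑ p : G × G, if p.1 * p.2 = x then sg g c p.1 * Θ p.1 (sg h d p.2) * (α p.1 p.2 : K) else 0) = _
  rw [Finset.sum_eq_single ((g, h) : G × G)]
  · simp [sg, eq_comm]
  · rintro ⟨p1, p2⟩ - hne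
    by_cases h1 : p1 = g
    · have h2 : p2 ≠ h := by rintro rfl; exact hne (by rw [h1])
      simp [sg, h1, h2]
    · simp [sg, h1]
  · simp

lemma psiMap_sg [Field K] [Group G] [Fintype G] [DecidableEq G]
    (δ : G → G) (κ : G → Kˣ) (g : G) (c : K) :
    psiMap δ κ (sg g c) = sg (δ g) (c * κ g) := by
  funext x
  show (∑ u : G, if δ u = x then sg g c u * (κ u : K) else 0) = _
  rw [Finset.sum_eq_single g]
  · simp [sg, eq_comm]
  · intro u _ hne
    simp [sg, hne]
  · simp

lemma psiMap_tsMul_eq [Field K] [Group G] [Fintype G] [DecidableEq G]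
    (Θ : G →* RingAut K) (α : G → G → Kˣ) (δ : G → G) (κ : G → Kˣ)
    (a b : G → K) (x : G) :
    psiMap δ κ (tsMul Θ α a b) x =
      ∑ p : G × G, if δ (p.1 * p.2) = x then
        a p.1 * Θ p.1 (b p.2) * (α p.1 p.2 : K) * (κ (p.1 * p.2) : K) else 0 := by
  unfold psiMap tsMul
  have step : ∀ g : G,
      (if δ g = x then
        (∑ p : G × G, if p.1 * p.2 = g then a p.1 * Θ p.1 (b p.2) * (α p.1 p.2 : K) else 0)
          * (κ g : K) else 0)
      = ∑ p : G × G, if δ g = x then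
          (if p.1 * p.2 = g then a p.1 * Θ p.1 (b p.2) * (α p.1 p.2 : K) * (κ g : K) else 0)
          else 0 := by
    intro g
    split_ifs with hg
    · rw [Finset.sum_mul]
      exact Finset.sum_congr rfl fun p _ => by split_ifs <;> simp
    · simp
  simp only [step]
  rw [Finset.sum_comm]
  refine Finset.sum_congr rfl fun p _ => ?_
  rw [Finset.sum_eq_single (p.1 * p.2)]
  · split_ifs <;> simp_all
  · intro g _ hne
    split_ifs with h1 h2 <;> simp_all
  · simp

lemma tsMul_psiMap_eq [Field K] [Group G] [Fintype G] [DecidableEq G]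
    (Θ' : G →* RingAut K) (α' : G → G → Kˣ) (δ : G → G) (hδ : Function.Injective δ)
    (κ : G → Kˣ) (a b : G → K) (x : G) :
    tsMul Θ' α' (psiMap δ κ a) (psiMap δ κ b) x =
      ∑ p : G × G, if δ p.1 * δ p.2 = x then
        (a p.1 * (κ p.1 : K)) * Θ' (δ p.1) (b p.2 * (κ p.2 : K)) * (α' (δ p.1) (δ p.2) : K)
        else 0 := by
  unfold tsMul psiMap
  have step : ∀ q : G × G,
      (if q.1 * q.2 = x then
        (∑ u : G, if δ u = q.1 then a u * (κ u : K) else 0) *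
          Θ' q.1 (∑ v : G, if δ v = q.2 then b v * (κ v : K) else 0) * (α' q.1 q.2 : K)
        else 0)
      = ∑ r : G × G, (if q.1 * q.2 = x then
          (if δ r.1 = q.1 then a r.1 * (κ r.1 : K) else 0) *
            Θ' q.1 (if δ r.2 = q.2 then b r.2 * (κ r.2 : K) else 0) * (α' q.1 q.2 : K)
          else 0) := by
    intro q
    split_ifs with hq
    · rw [map_sum, Finset.sum_mul_sum]
      simp only [Finset.sum_mul]
      rw [Fintype.sum_prod_type]
    · simp
  simp only [step]
  clear step
  rw [Finset.sum_comm]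
  refine Finset.sum_congr rfl fun p _ => ?_
  rw [Finset.sum_eq_single ((δ p.1, δ p.2) : G × G)]
  · simp
  · rintro ⟨q1, q2⟩ - hne
    by_cases h1 : δ p.1 = q1
    · have h2 : δ p.2 ≠ q2 := by rintro rfl; exact hne (by rw [h1])
      simp [h1, h2]
    · simp [h1]
  · simp

/-- The `K`-left-linear bijection `Ψ : K[G,Θ,α] → K[G,Θ',α']` with
`Ψ(a ḡ) = a·κ(g)·(δ(g))‾` is multiplicative (hence a distance-preserving ring
isomorphism) iff `δ` is a group automorphism with `Θ = Θ' ∘ δ` and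
`α(g,h) = κ(g)·Θ'(δ(g))(κ(h))·κ(gh)⁻¹·α'(δ(g),δ(h))`. -/
theorem stmt1 [Field K] [Fintype K] [Group G] [Fintype G] [DecidableEq G]
    (Θ Θ' : G →* RingAut K) (α α' : G → G → Kˣ)
    (hnorm : ∀ g : G, α g 1 = 1 ∧ α 1 g = 1)
    (hcoc : ∀ g₁ g₂ g₃ : G, α g₁ (g₂ * g₃) * α g₂ g₃ = α (g₁ * g₂) g₃ * α g₁ g₂)
    (hstab : ∀ g x y : G, Θ g ((α x y : K)) = (α x y : K))
    (hnorm' : ∀ g : G, α' g 1 = 1 ∧ α' 1 g = 1)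
    (hcoc' : ∀ g₁ g₂ g₃ : G, α' g₁ (g₂ * g₃) * α' g₂ g₃ = α' (g₁ * g₂) g₃ * α' g₁ g₂)
    (hstab' : ∀ g x y : G, Θ' g ((α' x y : K)) = (α' x y : K))
    (δ : G → G) (hδ : Function.Bijective δ)
    (κ : G → Kˣ) (hκ : κ 1 = 1) :
    (∀ a b : G → K,
        psiMap δ κ (tsMul Θ α a b) = tsMul Θ' α' (psiMap δ κ a) (psiMap δ κ b)) ↔
      ((∀ g h : G, δ (g * h) = δ g * δ h) ∧
       (∀ g : G, Θ g = Θ' (δ g)) ∧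
       (∀ g h : G, (α g h : K) =
          (κ g : K) * Θ' (δ g) (κ h : K) * ((κ (g * h) : K))⁻¹ * (α' (δ g) (δ h) : K))) := by
  constructor
  · intro H
    -- key computation on single basis elements
    have key : ∀ g h : G,
        sg (δ (g * h)) ((α g h : K) * (κ (g * h) : K))
          = sg (δ g * δ h) ((κ g : K) * Θ' (δ g) ((κ h : K)) * (α' (δ g) (δ h) : K)) := by
      intro g h
      have := H (sg g (1 : K)) (sg h (1 : K))
      rw [tsMul_sg, psiMap_sg, psiMap_sg, psiMap_sg, tsMul_sg] at this
      simpa [mul_comm] using this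
    have hmul : ∀ g h : G, δ (g * h) = δ g * δ h := by
      intro g h
      by_contra hne
      have := congrFun (key g h) (δ (g * h))
      simp only [sg, if_pos rfl, if_neg hne] at this
      exact (κ (g * h)).ne_zero (by
        rcases mul_eq_zero.mp this with h1 | h2
        · exact absurd h1 (α g h).ne_zero
        · exact h2)
    have hsc : ∀ g h : G, (α g h : K) * (κ (g * h) : K)
        = (κ g : K) * Θ' (δ g) ((κ h : K)) * (α' (δ g) (δ h) : K) := by
      intro g h
      have := congrFun (key g h) (δ (g * h))
      simpa [sg, hmul g h] using this
    have hone : δ 1 = 1 := by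
      have h1 := hmul 1 1
      rw [one_mul] at h1
      exact (mul_eq_left.mp h1.symm)
    refine ⟨hmul, ?_, ?_⟩
    · intro g
      ext c
      have := congrFun (H (sg g (1 : K)) (sg 1 c)) (δ g)
      rw [tsMul_sg, psiMap_sg, psiMap_sg, psiMap_sg, tsMul_sg] at this
      simp only [sg, (hnorm g).1, (hnorm' (δ g)).1, hone, hκ, mul_one, one_mul,
        Units.val_one, if_pos rfl] at this
      have hk : (κ g : K) ≠ 0 := (κ g).ne_zero
      exact mul_right_cancel₀ hk (this.trans (mul_comm _ _))
    · intro g h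
      have hk : (κ (g * h) : K) ≠ 0 := (κ (g * h)).ne_zero
      field_simp
      linear_combination hsc g h
  · rintro ⟨hmul, hΘ, hα⟩ a b
    funext x
    rw [psiMap_tsMul_eq, tsMul_psiMap_eq Θ' α' δ hδ.1]
    refine Finset.sum_congr rfl fun p _ => ?_
    rw [hmul p.1 p.2]
    split_ifs with hx
    · rw [hα p.1 p.2, ← hΘ p.1, map_mul]
      have hk : (κ (p.1 * p.2) : K) ≠ 0 := (κ (p.1 * p.2)).ne_zero
      field_simp
    · rfl
end

section
/- Let χ_K : (K,+) → ℂ^× be an additive character of K such that the map x ↦ (y ↦ χ_K(x·y)) from K to additive characters of K is injective, and define χ_R : R → ℂ^× by χ_R(Σ_g a_g ḡ) = χ_K(a_1) (the coefficient at 1̄). Then the map r ↦ (x ↦ χ_R(r·x)) is injective on R; that is, if r, r' ∈ R satisfy χ_R(r·x) = χ_R(r'·x) for all x ∈ R, then r = r'. Consequently R is isomorphic to its character module as a right R-module, i.e. R is a Frobenius ring. -/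
open Finset

variable {K : Type*} {G : Type*}

/-- The coefficient at `1̄` of a product in the twisted skew group ring. -/
lemma tsMul_one_apply [Field K] [Group G] [Fintype G] [DecidableEq G]
    (Θ : G →* RingAut K) (α : G → G → Kˣ) (r x : G → K) :
    tsMul Θ α r x 1 = ∑ g : G, r g * Θ g (x g⁻¹) * (α g g⁻¹ : K) := by
  rw [tsMul, Fintype.sum_prod_type]
  refine Finset.sum_congr rfl fun g _ => ?_
  have h : ∀ g₂ : G, (g * g₂ = 1) = (g⁻¹ = g₂) := by
    intro g₂; simp [mul_eq_one_iff_inv_eq]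
  simp only [h]
  rw [Finset.sum_ite_eq]
  simp

/-- An additive-to-multiplicative map sends finite sums to finite products. -/
lemma chi_sum_prod {K M : Type*} [AddCommMonoid K] [CommGroup M]
    (χ : K → M) (hadd : ∀ x y : K, χ (x + y) = χ x * χ y)
    {ι : Type*} (s : Finset ι) (f : ι → K) :
    χ (∑ i ∈ s, f i) = ∏ i ∈ s, χ (f i) := by
  have h0 : χ 0 = 1 := by
    have := hadd 0 0
    rw [add_zero] at this
    exact (mul_left_cancel (a := χ 0) (by rw [mul_one, ← this])).symm
  induction s using Finset.cons_induction with
  | empty => simpa using h0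
  | cons a s ha ih => rw [Finset.sum_cons, Finset.prod_cons, hadd, ih]

/-- Every additive character of a finite field is of the form `y ↦ χK (a * y)`
provided `a ↦ χK (a * ·)` is injective. -/
lemma addchar_surj {K : Type*} [Field K] [Fintype K] (χK : K → ℂˣ)
    (hχadd : ∀ x y : K, χK (x + y) = χK x * χK y)
    (hχinj : ∀ x x' : K, (∀ y : K, χK (x * y) = χK (x' * y)) → x = x')
    (φ : K → ℂˣ) (hφ : ∀ x y : K, φ (x + y) = φ x * φ y) :
    ∃ a : K, ∀ y : K, φ y = χK (a * y) := by
  classical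
  have h0 : χK 0 = 1 := by
    have := hχadd 0 0
    rw [add_zero] at this
    exact (mul_left_cancel (a := χK 0) (by rw [mul_one, ← this])).symm
  have hφ0 : φ 0 = 1 := by
    have := hφ 0 0
    rw [add_zero] at this
    exact (mul_left_cancel (a := φ 0) (by rw [mul_one, ← this])).symm
  let F : K → AddChar K ℂ := fun a =>
    { toFun := fun y => (χK (a * y) : ℂ)
      map_zero_eq_one' := by
        show (↑(χK (a * 0)) : ℂ) = 1
        rw [mul_zero, h0]; norm_cast
      map_add_eq_mul' := fun x y => by
        show (↑(χK (a * (x + y))) : ℂ) = ↑(χK (a * x)) * ↑(χK (a * y))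
        rw [mul_add, hχadd]; push_cast; ring }
  have hFinj : Function.Injective F := by
    intro a a' h
    refine hχinj a a' fun y => ?_
    have := DFunLike.congr_fun h y
    exact Units.ext this
  have hFsurj : Function.Surjective F :=
    ((Fintype.bijective_iff_injective_and_card F).2
      ⟨hFinj, by rw [AddChar.card_eq]⟩).2
  obtain ⟨a, ha⟩ := hFsurj
    { toFun := fun y => (φ y : ℂ)
      map_zero_eq_one' := by show (↑(φ 0) : ℂ) = 1; rw [hφ0]; norm_cast
      map_add_eq_mul' := fun x y => by
        show (↑(φ (x + y)) : ℂ) = ↑(φ x) * ↑(φ y)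
        rw [hφ]; push_cast; ring }
  refine ⟨a, fun y => ?_⟩
  have := DFunLike.congr_fun ha y
  exact (Units.ext this).symm

/-- The "delta" element of `R` supported at `g⁻¹` whose product-coefficient against `r`
at `1̄` is `r g * y`. -/
def tsDelta [Field K] [Group G] [DecidableEq G]
    (Θ : G →* RingAut K) (α : G → G → Kˣ) (g : G) (y : K) : G → K :=
  fun z => if z = g⁻¹ then Θ g⁻¹ (y * ((α g g⁻¹ : K))⁻¹) else 0

lemma tsDelta_add [Field K] [Group G] [DecidableEq G]
    (Θ : G →* RingAut K) (α : G → G → Kˣ) (g : G) (x y : K) :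
    tsDelta Θ α g (x + y) = tsDelta Θ α g x + tsDelta Θ α g y := by
  funext z
  by_cases hz : z = g⁻¹ <;> simp [tsDelta, hz, add_mul, map_add]

/-- Given a generating additive character `χ_K : K → ℂ^×` of `K`,
define `χ_R(Σ_g a_g ḡ) = χ_K(a_1)`.  Then the map `r ↦ (x ↦ χ_R(r·x))` is an injection
of `R` into the additive characters of `R`, and it is also surjective onto them;
since `(χ_R·r)(x) = χ_R(r·x)` this map is right-`R`-linear, so `R ≅ R̂` as right
`R`-modules, i.e. `R` is a Frobenius ring. -/
theorem stmt2 [Field K] [Fintype K] [Group G] [Fintype G] [DecidableEq G]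
    (Θ : G →* RingAut K) (α : G → G → Kˣ)
    (hnorm : ∀ g : G, α g 1 = 1 ∧ α 1 g = 1)
    (hcoc : ∀ g₁ g₂ g₃ : G, α g₁ (g₂ * g₃) * α g₂ g₃ = α (g₁ * g₂) g₃ * α g₁ g₂)
    (hstab : ∀ g x y : G, Θ g ((α x y : K)) = (α x y : K))
    (χK : K → ℂˣ)
    (hχadd : ∀ x y : K, χK (x + y) = χK x * χK y)
    (hχinj : ∀ x x' : K, (∀ y : K, χK (x * y) = χK (x' * y)) → x = x') :
    (∀ r r' : G → K,
        (∀ x : G → K, χK (tsMul Θ α r x 1) = χK (tsMul Θ α r' x 1)) → r = r') ∧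
    (∀ ψ : (G → K) → ℂˣ, (∀ x y : G → K, ψ (x + y) = ψ x * ψ y) →
        ∃ r : G → K, ∀ x : G → K, ψ x = χK (tsMul Θ α r x 1)) := by
  classical
  have hΘ : ∀ (g : G) (z : K), Θ g (Θ g⁻¹ z) = z := by
    intro g z
    have h1 : Θ g * Θ g⁻¹ = 1 := by rw [← map_mul, mul_inv_cancel, map_one]
    calc Θ g (Θ g⁻¹ z) = (Θ g * Θ g⁻¹) z := rfl
      _ = z := by rw [h1]; rfl
  have hdelta : ∀ (r : G → K) (g : G) (y : K),
      tsMul Θ α r (tsDelta Θ α g y) 1 = r g * y := by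
    intro r g y
    rw [tsMul_one_apply, Finset.sum_eq_single g]
    · simp only [tsDelta]
      rw [if_true, hΘ, mul_assoc, mul_assoc, inv_mul_cancel₀ (Units.ne_zero _), mul_one]
    · intro h _ hh
      have hne : (h⁻¹ : G) ≠ g⁻¹ := fun he => hh (by simpa using he)
      simp [tsDelta, hne]
    · intro h; exact absurd (Finset.mem_univ g) h
  constructor
  · -- injectivity
    intro r r' h
    funext g
    refine hχinj (r g) (r' g) fun y => ?_
    have := h (tsDelta Θ α g y)
    rwa [hdelta, hdelta] at this
  · -- surjectivity
    intro ψ hψ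
    have key : ∀ g : G, ∃ a : K, ∀ y : K, ψ (tsDelta Θ α g y) = χK (a * y) := by
      intro g
      refine addchar_surj χK hχadd hχinj (fun y => ψ (tsDelta Θ α g y)) fun x y => ?_
      show ψ (tsDelta Θ α g (x + y)) = ψ (tsDelta Θ α g x) * ψ (tsDelta Θ α g y)
      rw [tsDelta_add, hψ]
    choose r hr using key
    refine ⟨r, fun x => ?_⟩
    have hx : x = ∑ g : G, tsDelta Θ α g (Θ g (x g⁻¹) * (α g g⁻¹ : K)) := by
      funext z
      rw [Finset.sum_apply, Finset.sum_eq_single z⁻¹]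
      · simp only [tsDelta, inv_inv]
        rw [if_true, mul_assoc, mul_inv_cancel₀ (Units.ne_zero _), mul_one, hΘ]
      · intro h _ hh
        have hne : z ≠ h⁻¹ := fun he => hh (by rw [he, inv_inv])
        simp [tsDelta, hne]
      · intro h; exact absurd (Finset.mem_univ z⁻¹) h
    calc ψ x = ∏ g : G, ψ (tsDelta Θ α g (Θ g (x g⁻¹) * (α g g⁻¹ : K))) := by
          rw [← chi_sum_prod ψ hψ, ← hx]
      _ = ∏ g : G, χK (r g * (Θ g (x g⁻¹) * (α g g⁻¹ : K))) :=
          Finset.prod_congr rfl fun g _ => hr g _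
      _ = χK (∑ g : G, r g * Θ g (x g⁻¹) * (α g g⁻¹ : K)) := by
          rw [chi_sum_prod χK hχadd]
          exact Finset.prod_congr rfl fun g _ => by rw [mul_assoc]
      _ = χK (tsMul Θ α r x 1) := by rw [tsMul_one_apply]
end

section
/- (Maschke's theorem for twisted skew group rings.) If the characteristic of K does not divide the order of G, then the twisted skew group ring R = K[G,Θ,α] is a semisimple ring. -/
open Finset

variable {K : Type*} {G : Type*}

section Aux
variable [Field K] [Group G] [Fintype G] [DecidableEq G]
variable (Θ : G →* RingAut K) (α : G → G → Kˣ)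

/-- Left multiplication by the basis element `ḡ`. -/
def Lmap (g : G) (v : G → K) : G → K :=
  fun x => Θ g (v (g⁻¹ * x)) * (α g (g⁻¹ * x) : K)

lemma tsMul_eq_sum (a b : G → K) :
    tsMul Θ α a b = ∑ g : G, a g • Lmap Θ α g b := by
  funext x
  rw [tsMul, Fintype.sum_prod_type, Finset.sum_apply]
  refine Finset.sum_congr rfl fun g _ => ?_
  have key : ∀ h : G, (g * h = x) = (h = g⁻¹ * x) := fun h => by
    rw [eq_iff_iff]
    constructor
    · intro hh; subst hh; group
    · intro hh; subst hh; group
  simp_rw [key]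
  rw [Finset.sum_ite_eq' Finset.univ (g⁻¹ * x)
    (fun h => a g * Θ g (b h) * (α g h : K))]
  simp [Lmap, mul_assoc]

lemma tsMul_delta (g : G) (v : G → K) :
    tsMul Θ α (fun x => if x = g then 1 else 0) v = Lmap Θ α g v := by
  rw [tsMul_eq_sum]
  simp [ite_smul]

lemma tsMul_zero (a : G → K) : tsMul Θ α a 0 = 0 := by
  funext x; simp [tsMul]

lemma Lmap_add (g : G) (v w : G → K) :
    Lmap Θ α g (v + w) = Lmap Θ α g v + Lmap Θ α g w := by
  funext x; simp [Lmap, add_mul]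

lemma Lmap_smul (g : G) (c : K) (v : G → K) :
    Lmap Θ α g (c • v) = Θ g c • Lmap Θ α g v := by
  funext x; simp [Lmap, mul_assoc]

lemma Lmap_sum {ι : Type*} (g : G) (s : Finset ι) (f : ι → (G → K)) :
    Lmap Θ α g (∑ i ∈ s, f i) = ∑ i ∈ s, Lmap Θ α g (f i) := by
  funext x
  simp [Lmap, Finset.sum_apply, map_sum, Finset.sum_mul]

lemma Lmap_one (hnorm : ∀ g : G, α g 1 = 1 ∧ α 1 g = 1) (v : G → K) :
    Lmap Θ α 1 v = v := by
  funext x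
  have h1 : (1:G)⁻¹ * x = x := by group
  simp only [Lmap, h1, (hnorm x).2, map_one, Units.val_one, mul_one]
  rfl

lemma Lmap_comp
    (hcoc : ∀ g₁ g₂ g₃ : G, α g₁ (g₂ * g₃) * α g₂ g₃ = α (g₁ * g₂) g₃ * α g₁ g₂)
    (hstab : ∀ g x y : G, Θ g ((α x y : K)) = (α x y : K))
    (g h : G) (v : G → K) :
    Lmap Θ α g (Lmap Θ α h v) = (α g h : K) • Lmap Θ α (g * h) v := by
  funext x
  have harg : h⁻¹ * (g⁻¹ * x) = (g * h)⁻¹ * x := by group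
  have hmulapp : ∀ c : K, Θ g (Θ h c) = Θ (g * h) c := fun c => by
    rw [map_mul]; rfl
  have hc := congrArg (fun u : Kˣ => (u : K)) (hcoc g h ((g * h)⁻¹ * x))
  have harg2 : h * ((g * h)⁻¹ * x) = g⁻¹ * x := by group
  rw [harg2] at hc
  push_cast at hc
  have hL : ∀ a b : K, Θ g (a * b) = Θ g a * Θ g b := map_mul (Θ g)
  simp only [Lmap, Pi.smul_apply, smul_eq_mul, harg]
  rw [hL, hstab, hmulapp]
  linear_combination Θ (g*h) (v ((g*h)⁻¹ * x)) * hc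

end Aux

section Aux2
variable [Field K] [Group G] [Fintype G] [DecidableEq G]
variable (Θ : G →* RingAut K) (α : G → G → Kˣ)

lemma theta_inv_apply (g : G) (c : K) : Θ g⁻¹ (Θ g c) = c := by
  have : Θ g⁻¹ (Θ g c) = (Θ g⁻¹ * Θ g) c := rfl
  rw [this, ← map_mul, inv_mul_cancel, map_one]; rfl

lemma alpha_inv_comm
    (hnorm : ∀ g : G, α g 1 = 1 ∧ α 1 g = 1)
    (hcoc : ∀ g₁ g₂ g₃ : G, α g₁ (g₂ * g₃) * α g₂ g₃ = α (g₁ * g₂) g₃ * α g₁ g₂)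
    (g : G) : α g⁻¹ g = α g g⁻¹ := by
  have h := hcoc g g⁻¹ g
  rw [inv_mul_cancel, mul_inv_cancel, (hnorm g).1, (hnorm g).2, one_mul, one_mul] at h
  exact h

lemma beta_key
    (hnorm : ∀ g : G, α g 1 = 1 ∧ α 1 g = 1)
    (hcoc : ∀ g₁ g₂ g₃ : G, α g₁ (g₂ * g₃) * α g₂ g₃ = α (g₁ * g₂) g₃ * α g₁ g₂)
    (g h : G) :
    (((α g⁻¹ g)⁻¹ : Kˣ) : K) * (α g h : K)
      = (((α (g * h)⁻¹ (g * h))⁻¹ : Kˣ) : K) * (α h (g * h)⁻¹ : K) := by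
  have key : (α g⁻¹ g)⁻¹ * α g h = (α (g * h)⁻¹ (g * h))⁻¹ * α h (g * h)⁻¹ := by
    rw [alpha_inv_comm α hnorm hcoc g, alpha_inv_comm α hnorm hcoc (g * h)]
    have hA := hcoc g h (g * h)⁻¹
    rw [show h * (g * h)⁻¹ = g⁻¹ by group] at hA
    rw [inv_mul_eq_iff_eq_mul, mul_left_comm, hA, inv_mul_cancel_left]
  exact_mod_cast congrArg (fun u : Kˣ => (u : K)) key

/-- The averaged projection. -/
def piT (pr : (G → K) →ₗ[K] (G → K)) (v : G → K) : G → K :=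
  (Fintype.card G : K)⁻¹ •
    ∑ g : G, (((α g⁻¹ g)⁻¹ : Kˣ) : K) • Lmap Θ α g⁻¹ (pr (Lmap Θ α g v))

variable (pr : (G → K) →ₗ[K] (G → K))

lemma piT_mem (C : Submodule K (G → K))
    (hLC : ∀ g : G, ∀ c ∈ C, Lmap Θ α g c ∈ C)
    (hprC : ∀ v, pr v ∈ C) (v : G → K) : piT Θ α pr v ∈ C :=
  Submodule.smul_mem _ _ (Submodule.sum_mem _ fun g _ =>
    Submodule.smul_mem _ _ (hLC _ _ (hprC _)))

lemma piT_add (v w : G → K) :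
    piT Θ α pr (v + w) = piT Θ α pr v + piT Θ α pr w := by
  simp only [piT, Lmap_add, map_add, smul_add, Finset.sum_add_distrib]

lemma piT_smul (c : K) (v : G → K) :
    piT Θ α pr (c • v) = c • piT Θ α pr v := by
  simp only [piT, Lmap_smul, map_smul, theta_inv_apply]
  simp_rw [smul_comm _ c]
  rw [← Finset.smul_sum, smul_comm _ c]

end Aux2

section Aux3
variable [Field K] [Group G] [Fintype G] [DecidableEq G]
variable (Θ : G →* RingAut K) (α : G → G → Kˣ) (pr : (G → K) →ₗ[K] (G → K))

lemma piT_id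
    (hnorm : ∀ g : G, α g 1 = 1 ∧ α 1 g = 1)
    (hcoc : ∀ g₁ g₂ g₃ : G, α g₁ (g₂ * g₃) * α g₂ g₃ = α (g₁ * g₂) g₃ * α g₁ g₂)
    (hstab : ∀ g x y : G, Θ g ((α x y : K)) = (α x y : K))
    (hn : (Fintype.card G : K) ≠ 0)
    (C : Submodule K (G → K))
    (hLC : ∀ g : G, ∀ c ∈ C, Lmap Θ α g c ∈ C)
    (hprid : ∀ c ∈ C, pr c = c)
    (c : G → K) (hc : c ∈ C) : piT Θ α pr c = c := by
  rw [piT]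
  have step : ∀ g : G,
      (((α g⁻¹ g)⁻¹ : Kˣ) : K) • Lmap Θ α g⁻¹ (pr (Lmap Θ α g c)) = c := by
    intro g
    rw [hprid _ (hLC g c hc), Lmap_comp Θ α hcoc hstab, inv_mul_cancel,
      Lmap_one Θ α hnorm, smul_smul]
    rw [Units.val_inv_eq_inv_val, inv_mul_cancel₀ (Units.ne_zero _), one_smul]
  simp_rw [step]
  rw [Finset.sum_const, Finset.card_univ, ← Nat.cast_smul_eq_nsmul K, smul_smul,
    inv_mul_cancel₀ hn, one_smul]

lemma piT_L
    (hnorm : ∀ g : G, α g 1 = 1 ∧ α 1 g = 1)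
    (hcoc : ∀ g₁ g₂ g₃ : G, α g₁ (g₂ * g₃) * α g₂ g₃ = α (g₁ * g₂) g₃ * α g₁ g₂)
    (hstab : ∀ g x y : G, Θ g ((α x y : K)) = (α x y : K))
    (h : G) (v : G → K) :
    piT Θ α pr (Lmap Θ α h v) = Lmap Θ α h (piT Θ α pr v) := by
  have hβ : ∀ k : G, Θ h ((((α k⁻¹ k)⁻¹ : Kˣ) : K)) = (((α k⁻¹ k)⁻¹ : Kˣ) : K) := by
    intro k
    rw [Units.val_inv_eq_inv_val, map_inv₀, hstab]
  have hn' : Θ h ((Fintype.card G : K)⁻¹) = (Fintype.card G : K)⁻¹ := by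
    rw [map_inv₀, map_natCast]
  rw [piT, piT, Lmap_smul, hn', Lmap_sum]
  congr 1
  simp_rw [Lmap_smul, hβ, Lmap_comp Θ α hcoc hstab, map_smul, Lmap_smul, hstab,
    smul_smul]
  refine Fintype.sum_equiv (Equiv.mulRight h) _ _ fun g => ?_
  simp only [Equiv.coe_mulRight]
  rw [show h * (g * h)⁻¹ = g⁻¹ by group, beta_key α hnorm hcoc g h]

end Aux3

/-- **Maschke.** If `char K ∤ |G|`, then `R = K[G,Θ,α]` is semisimple:
every left ideal of `R` (a `K`-subspace closed under left multiplication) admits a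
left-ideal complement. -/
theorem stmt3 [Field K] [Fintype K] [Group G] [Fintype G] [DecidableEq G]
    (Θ : G →* RingAut K) (α : G → G → Kˣ)
    (hnorm : ∀ g : G, α g 1 = 1 ∧ α 1 g = 1)
    (hcoc : ∀ g₁ g₂ g₃ : G, α g₁ (g₂ * g₃) * α g₂ g₃ = α (g₁ * g₂) g₃ * α g₁ g₂)
    (hstab : ∀ g x y : G, Θ g ((α x y : K)) = (α x y : K))
    (hchar : ¬ (ringChar K ∣ Fintype.card G)) :
    ∀ C : Submodule K (G → K), (∀ r : G → K, ∀ c ∈ C, tsMul Θ α r c ∈ C) →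
      ∃ D : Submodule K (G → K), (∀ r : G → K, ∀ d ∈ D, tsMul Θ α r d ∈ D) ∧
        C ⊓ D = ⊥ ∧ C ⊔ D = ⊤ := by
  intro C hC
  have hLC : ∀ g : G, ∀ c ∈ C, Lmap Θ α g c ∈ C := by
    intro g c hc
    rw [← tsMul_delta Θ α g c]
    exact hC _ c hc
  obtain ⟨E, hE⟩ := Submodule.exists_isCompl C
  set pr : (G → K) →ₗ[K] (G → K) :=
    C.subtype.comp (C.linearProjOfIsCompl E hE) with hprdef
  have hprC : ∀ v, pr v ∈ C := fun v => Submodule.coe_mem _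
  have hprid : ∀ c ∈ C, pr c = c := by
    intro c hc
    exact congrArg Subtype.val (Submodule.linearProjOfIsCompl_apply_left hE ⟨c, hc⟩)
  have hn : (Fintype.card G : K) ≠ 0 := by
    intro h0
    exact hchar ((CharP.cast_eq_zero_iff K (ringChar K) _).mp h0)
  set F : (G → K) →ₗ[K] (G → K) :=
    { toFun := piT Θ α pr
      map_add' := piT_add Θ α pr
      map_smul' := piT_smul Θ α pr } with hFdef
  have hF : ∀ v, F v = piT Θ α pr v := fun _ => rfl
  have hFC : ∀ v, F v ∈ C := fun v => piT_mem Θ α pr C hLC hprC v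
  have hFid : ∀ c ∈ C, F c = c := fun c hc =>
    piT_id Θ α pr hnorm hcoc hstab hn C hLC hprid c hc
  have hcomm : ∀ r v, F (tsMul Θ α r v) = tsMul Θ α r (F v) := by
    intro r v
    rw [tsMul_eq_sum, tsMul_eq_sum Θ α r (F v), map_sum]
    refine Finset.sum_congr rfl fun g _ => ?_
    rw [map_smul, hF, hF, piT_L Θ α pr hnorm hcoc hstab]
  refine ⟨LinearMap.ker F, ?_, ?_, ?_⟩
  · intro r d hd
    rw [LinearMap.mem_ker] at hd ⊢
    rw [hcomm, hd, tsMul_zero]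
  · rw [eq_bot_iff]
    intro v hv
    rw [Submodule.mem_bot]
    have h1 := hFid v hv.1
    have h2 := LinearMap.mem_ker.mp hv.2
    rw [← h1, h2]
  · rw [eq_top_iff]
    intro v _
    have hker : v - F v ∈ LinearMap.ker F := by
      rw [LinearMap.mem_ker, map_sub, hFid (F v) (hFC v), sub_self]
    exact Submodule.mem_sup.mpr ⟨F v, hFC v, v - F v, hker, by abel⟩
end

section
/- The adjoint map a ↦ â from K[G,Θ,α] to K[G,Θ,α⁻¹] is an additive bijection that preserves Hamming weight, maps 1̄ to 1̄, and is a ring anti-homomorphism: for all a, b ∈ K[G,Θ,α], the adjoint of a·b (product in K[G,Θ,α]) equals b̂·â (product in K[G,Θ,α⁻¹]). -/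
open Finset

variable {K : Type*} {G : Type*}

/-- The adjoint map `a ↦ â` from `K[G,Θ,α]` to `K[G,Θ,α⁻¹]` is an
additive, Hamming-weight-preserving bijection sending `1̄` to `1̄`, and it is a ring
anti-homomorphism: the adjoint of `a·b` (product in `K[G,Θ,α]`) equals `b̂·â`
(product in `K[G,Θ,α⁻¹]`). -/
theorem stmt4 [Field K] [Fintype K] [DecidableEq K] [Group G] [Fintype G] [DecidableEq G]
    (Θ : G →* RingAut K) (α : G → G → Kˣ)
    (hnorm : ∀ g : G, α g 1 = 1 ∧ α 1 g = 1)
    (hcoc : ∀ g₁ g₂ g₃ : G, α g₁ (g₂ * g₃) * α g₂ g₃ = α (g₁ * g₂) g₃ * α g₁ g₂)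
    (hstab : ∀ g x y : G, Θ g ((α x y : K)) = (α x y : K)) :
    (∀ a b : G → K, tsAdj Θ α (a + b) = tsAdj Θ α a + tsAdj Θ α b) ∧
    Function.Bijective (tsAdj Θ α) ∧
    (∀ a : G → K, hammingNorm (tsAdj Θ α a) = hammingNorm a) ∧
    tsAdj Θ α tsOne = tsOne ∧
    (∀ a b : G → K,
        tsAdj Θ α (tsMul Θ α a b) =
          tsMul Θ (fun x y => (α x y)⁻¹) (tsAdj Θ α b) (tsAdj Θ α a)) := by
  have hΘ : ∀ (x y : G) (c : K), Θ x (Θ y c) = Θ (x * y) c := by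
    intro x y c; rw [map_mul]; rfl
  have hmul : ∀ (x : G) (c d : K), Θ x (c * d) = Θ x c * Θ x d := by
    intro x c d; exact map_mul (Θ x) c d
  have hΘ1 : ∀ c : K, Θ (1 : G) c = c := by
    intro c; rw [map_one]; rfl
  have hstab' : ∀ g x y : G, Θ g (((α x y : K))⁻¹) = ((α x y : K))⁻¹ := by
    intro g x y; rw [map_inv₀, hstab]
  refine ⟨?_, ?_, ?_, ?_, ?_⟩
  · intro a b; funext x
    simp [tsAdj, Pi.add_apply, map_add, add_mul]
  · refine Function.bijective_iff_has_inverse.mpr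
      ⟨fun b x => Θ x (b x⁻¹) * ((α x x⁻¹ : K))⁻¹, ?_, ?_⟩
    · intro a; funext x
      simp only [tsAdj, inv_inv, map_mul, hΘ, hstab, inv_mul_cancel, hΘ1]
      field_simp
      rw [← map_mul Θ, mul_inv_cancel]; exact hΘ1 _
    · intro b; funext x
      show Θ x (Θ x⁻¹ (b x⁻¹⁻¹) * ((α x⁻¹ x⁻¹⁻¹ : K))⁻¹) * (α x⁻¹ x : K) = b x
      simp only [inv_inv, map_mul, hΘ, hstab', mul_inv_cancel, hΘ1]
      field_simp
  · intro a
    unfold hammingNorm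
    apply Finset.card_bij (fun x _ => x⁻¹)
    · intro x hx
      simp only [mem_filter, mem_univ, true_and, tsAdj] at hx ⊢
      intro h0
      exact (Finset.mem_filter.mp hx).2 (by simp [h0])
    · intro x _ y _ h; exact inv_injective h
    · intro y hy
      refine ⟨y⁻¹, ?_, by simp⟩
      simp only [mem_filter, mem_univ, true_and, tsAdj, inv_inv, ne_eq, mul_eq_zero,
        map_eq_zero, Units.ne_zero, or_false] at hy ⊢
      exact hy
  · funext x
    by_cases hx : x = 1
    · subst hx
      simp [tsAdj, tsOne, (hnorm 1).1]
    · simp [tsAdj, tsOne, inv_eq_one, hx]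
  · intro a b
    have key : ∀ g h : G, (α g h : K) * α (g * h) (h⁻¹ * g⁻¹) * α h⁻¹ g⁻¹
        = (α h h⁻¹ : K) * α g g⁻¹ := by
      intro g h
      have h1 := hcoc g h (h⁻¹ * g⁻¹)
      rw [mul_inv_cancel_left] at h1
      have h2 := hcoc h h⁻¹ g⁻¹
      rw [mul_inv_cancel, (hnorm g⁻¹).2, one_mul] at h2
      have h1K := congrArg (Units.val : Kˣ → K) h1
      have h2K := congrArg (Units.val : Kˣ → K) h2
      push_cast at h1K h2K
      linear_combination (-(α h⁻¹ g⁻¹ : K)) * h1K + (α g g⁻¹ : K) * h2K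
    funext x
    simp only [tsAdj, tsMul, map_sum, Finset.sum_mul]
    refine Fintype.sum_equiv ⟨fun p => (p.2⁻¹, p.1⁻¹), fun p => (p.2⁻¹, p.1⁻¹),
      fun p => by simp, fun p => by simp⟩ _ _ fun p => ?_
    obtain ⟨g, h⟩ := p
    simp only [Equiv.coe_fn_mk]
    by_cases hp : g * h = x⁻¹
    · have hq : h⁻¹ * g⁻¹ = x := by rw [← mul_inv_rev, hp, inv_inv]
      subst hq
      rw [if_pos hp, if_pos rfl]
      simp only [inv_inv, hmul, hΘ, hstab, hstab', Units.val_inv_eq_inv_val]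
      have e1 : h⁻¹ * g⁻¹ * g = h⁻¹ := by group
      have e2 : (h⁻¹ * g⁻¹)⁻¹ = g * h := by group
      rw [e1, e2]
      have hk := key g h
      have hα : (α h⁻¹ g⁻¹ : K) ≠ 0 := Units.ne_zero _
      set A := (Θ (h⁻¹ * g⁻¹)) (a g) with hA
      set B := (Θ h⁻¹) (b h) with hB
      set u := (α g h : K) with hu
      set v := (α (g * h) (h⁻¹ * g⁻¹) : K) with hv
      set w := (α h⁻¹ g⁻¹ : K) with hw
      set p' := (α h h⁻¹ : K) with hp'
      set q' := (α g g⁻¹ : K) with hq'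
      field_simp
      linear_combination A * B * hk
    · have hp' : ¬(h⁻¹ * g⁻¹ = x) := by
        intro hc; exact hp (by rw [← hc]; group)
      rw [if_neg hp, if_neg hp', map_zero, zero_mul]
end

section
/- If the normalized 2-cocycle α satisfies α = α⁻¹ (i.e. α(x,y)² = 1 for all x,y ∈ G, so that K[G,Θ,α⁻¹] = K[G,Θ,α]), then the adjoint map is an involution: for every a ∈ R = K[G,Θ,α] one has â̂ = a. -/
open Finset

variable {K : Type*} {G : Type*}

/-- If the normalized 2-cocycle `α` satisfies `α = α⁻¹`
(i.e. `α(x,y)² = 1` for all `x,y`), so that `K[G,Θ,α⁻¹] = K[G,Θ,α]`, then the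
adjoint map is an involution: `â̂ = a` for every `a ∈ R`. -/
theorem stmt5 [Field K] [Fintype K] [Group G] [Fintype G] [DecidableEq G]
    (Θ : G →* RingAut K) (α : G → G → Kˣ)
    (hnorm : ∀ g : G, α g 1 = 1 ∧ α 1 g = 1)
    (hcoc : ∀ g₁ g₂ g₃ : G, α g₁ (g₂ * g₃) * α g₂ g₃ = α (g₁ * g₂) g₃ * α g₁ g₂)
    (hstab : ∀ g x y : G, Θ g ((α x y : K)) = (α x y : K))
    (hα2 : ∀ x y : G, (α x y : K) ^ 2 = 1) :
    ∀ a : G → K, tsAdj Θ α (tsAdj Θ α a) = a := by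
  intro a
  funext x
  have hsym : α x⁻¹ x = α x x⁻¹ := by
    have h := hcoc x x⁻¹ x
    simpa [(hnorm x).1, (hnorm x).2] using h
  simp only [tsAdj, inv_inv, map_mul, hstab]
  rw [show (Θ x) ((Θ x⁻¹) (a x)) = a x by
    rw [map_inv]; exact (Θ x).apply_symm_apply _]
  rw [hsym]
  have := hα2 x x⁻¹
  rw [mul_assoc, ← sq, this, mul_one]
end

section
/- Let G = ⟨g⟩ be cyclic of order n, Θ : G → Aut(K) a group homomorphism, and α a normalized 2-cocycle stabilized by Θ(G). Then there exist λ ∈ K^* fixed by Θ(g) and a map κ : G → K^* with κ(1) = 1 taking values in the fixed field of Θ(g), such that for all 0 ≤ i, j ≤ n−1, α(g^i, g^j) = κ(g^i)·κ(g^j)·κ(g^{i+j})⁻¹·α_λ(g^i, g^j), where α_λ(g^i, g^j) = 1 if 0 ≤ i+j < n and α_λ(g^i, g^j) = λ if n ≤ i+j ≤ 2(n−1). Consequently K[G,Θ,α] is isomorphic, via a K-left-linear distance-preserving ring isomorphism, to K[G,Θ,α_λ]; i.e. every twisted skew group code over a cyclic group is a skew λ-constacyclic code. -/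
open Finset

variable {K : Type*} {G : Type*}

/-- For `G = ⟨g⟩` cyclic of order `n`, any normalized 2-cocycle `α`
stabilized by `Θ(G)` is cohomologous (via a map `κ` with values in the fixed field
of `Θ(g)`) to the constacyclic cocycle `α_λ` for some `λ ∈ K^*` fixed by `Θ(g)`;
consequently `K[G,Θ,α] ≅ K[G,Θ,α_λ]` via the `K`-left-linear, distance-preserving
ring isomorphism `a ḡ ↦ a·κ(g)·ḡ`, i.e. every twisted skew group code over a cyclic
group is a skew `λ`-constacyclic code. -/
theorem stmt7 [Field K] [Fintype K] [Group G] [Fintype G] [DecidableEq G]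
    (Θ : G →* RingAut K) (α : G → G → Kˣ)
    (hnorm : ∀ g : G, α g 1 = 1 ∧ α 1 g = 1)
    (hcoc : ∀ g₁ g₂ g₃ : G, α g₁ (g₂ * g₃) * α g₂ g₃ = α (g₁ * g₂) g₃ * α g₁ g₂)
    (hstab : ∀ g x y : G, Θ g ((α x y : K)) = (α x y : K))
    (g : G) (hg : ∀ x : G, x ∈ Subgroup.zpowers g)
    (n : ℕ) (hn : n = Fintype.card G) :
    ∃ (lam : Kˣ) (κ : G → Kˣ),
      Θ g (lam : K) = (lam : K) ∧
      κ 1 = 1 ∧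
      (∀ x : G, Θ g ((κ x : K)) = (κ x : K)) ∧
      (∀ i j : ℕ, i < n → j < n →
        (α (g ^ i) (g ^ j) : K) =
          (κ (g ^ i) : K) * (κ (g ^ j) : K) * ((κ (g ^ (i + j)) : K))⁻¹ *
            (if i + j < n then 1 else (lam : K))) ∧
      ∃ αlam : G → G → Kˣ,
        (∀ i j : ℕ, i < n → j < n →
          αlam (g ^ i) (g ^ j) = if i + j < n then 1 else lam) ∧
        (∀ a b : G → K,
          psiMap id κ (tsMul Θ α a b) = tsMul Θ αlam (psiMap id κ a) (psiMap id κ b)) := by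
  classical
  have hn0 : 0 < n := by rw [hn]; exact Fintype.card_pos
  have hord : orderOf g = n := by
    rw [hn, ← Nat.card_eq_fintype_card]; exact orderOf_eq_card_of_forall_mem_zpowers hg
  have hgn : g ^ n = 1 := by rw [← hord]; exact pow_orderOf_eq_one g
  have hgmod : ∀ m : ℕ, g ^ (m % n) = g ^ m := by
    intro m; rw [← hord]; exact pow_mod_orderOf ..
  -- existence of discrete log
  have hfin : IsOfFinOrder g := by
    rw [← orderOf_pos_iff, hord]; exact hn0
  have hexists : ∀ x : G, ∃ i, i < n ∧ g ^ i = x := by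
    intro x
    obtain ⟨m, hm⟩ := hfin.mem_powers_iff_mem_zpowers.mpr (hg x)
    exact ⟨m % n, Nat.mod_lt _ hn0, by rw [hgmod]; exact hm⟩
  have huniq : ∀ i j : ℕ, i < n → j < n → g ^ i = g ^ j → i = j := by
    intro i j hi hj h
    exact pow_injOn_Iio_orderOf (by simpa [hord] using hi) (by simpa [hord] using hj) h
  set ind : G → ℕ := fun x => (hexists x).choose with hind
  have hindlt : ∀ x : G, ind x < n := fun x => (hexists x).choose_spec.1
  have hindpow : ∀ x : G, g ^ ind x = x := fun x => (hexists x).choose_spec.2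
  have hindval : ∀ i : ℕ, i < n → ind (g ^ i) = i := fun i hi =>
    huniq _ _ (hindlt _) hi (hindpow _)
  -- the products c
  set c : ℕ → Kˣ := fun m => ∏ k ∈ Finset.range m, α (g ^ k) g with hc
  have hc0 : c 0 = 1 := by simp [hc]
  have hcsucc : ∀ m, c (m + 1) = c m * α (g ^ m) g := by
    intro m; simp [hc, Finset.prod_range_succ]
  -- fixedness
  have hfixc : ∀ m, Θ g ((c m : K)) = (c m : K) := by
    intro m
    have hcm : (c m : K) = ∏ k ∈ Finset.range m, ((α (g ^ k) g : K)) := by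
      rw [hc]; exact Units.coe_prod _ _
    rw [hcm, map_prod]
    exact Finset.prod_congr rfl fun k _ => hstab g _ _
  have hfixall : ∀ (a : K), Θ g a = a → ∀ x : G, Θ x a = a := by
    intro a ha x
    have hnat : ∀ m : ℕ, Θ (g ^ m) a = a := by
      intro m
      induction m with
      | zero => rw [pow_zero, map_one]; rfl
      | succ m ih =>
        have : Θ (g ^ (m + 1)) a = Θ (g ^ m) (Θ g a) := by
          rw [pow_succ, map_mul]; rfl
        rw [this, ha, ih]
    rw [← hindpow x]; exact hnat _
  -- key cocycle computation
  have hA : ∀ i j : ℕ, (α (g ^ i) (g ^ j) : K) * (c i : K) * (c j : K) = (c (i + j) : K) := by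
    intro i j
    induction j with
    | zero => simp [hc, (hnorm (g ^ i)).1]
    | succ j ih =>
      have key := hcoc (g ^ i) (g ^ j) g
      rw [← pow_succ, ← pow_add] at key
      have key' : (α (g ^ i) (g ^ (j + 1)) : K) * (α (g ^ j) g : K) =
          (α (g ^ (i + j)) g : K) * (α (g ^ i) (g ^ j) : K) := by
        exact_mod_cast congrArg Units.val key
      have h1 : (c (j + 1) : K) = (c j : K) * (α (g ^ j) g : K) := by
        rw [hcsucc]; push_cast; ring
      have h2 : (c (i + (j + 1)) : K) = (c (i + j) : K) * (α (g ^ (i + j)) g : K) := by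
        rw [show i + (j + 1) = (i + j) + 1 from rfl, hcsucc]; push_cast; ring
      rw [h1, h2]
      linear_combination ((c i : K) * (c j : K)) * key' + (α (g ^ (i + j)) g : K) * ih
  have hB : ∀ m, c (n + m) = c n * c m := by
    intro m
    rw [hc]
    simp only []
    rw [Finset.prod_range_add]
    congr 1
    exact Finset.prod_congr rfl fun k _ => by rw [pow_add, hgn, one_mul]
  -- definitions
  set lam : Kˣ := c n with hlam
  set κ : G → Kˣ := fun x => (c (ind x))⁻¹ with hκ
  have hκpow : ∀ i : ℕ, i < n → κ (g ^ i) = (c i)⁻¹ := by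
    intro i hi; rw [hκ]; simp only []; rw [hindval i hi]
  have hfixκ : ∀ x : G, Θ g ((κ x : K)) = (κ x : K) := by
    intro x
    rw [hκ]
    simp only [Units.val_inv_eq_inv_val, map_inv₀, hfixc]
  have hΘκ : ∀ x y : G, Θ x ((κ y : K)) = (κ y : K) := fun x y => hfixall _ (hfixκ y) x
  -- main identity
  have hMain : ∀ i j : ℕ, i < n → j < n →
      (α (g ^ i) (g ^ j) : K) =
        (κ (g ^ i) : K) * (κ (g ^ j) : K) * ((κ (g ^ (i + j)) : K))⁻¹ *
          (if i + j < n then 1 else (lam : K)) := by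
    intro i j hi hj
    have hij : (i + j) % n < n := Nat.mod_lt _ hn0
    have hκij : κ (g ^ (i + j)) = (c ((i + j) % n))⁻¹ := by
      rw [← hgmod (i + j)]; exact hκpow _ hij
    rw [hκpow i hi, hκpow j hj, hκij]
    have hAij := hA i j
    by_cases h : i + j < n
    · rw [if_pos h, Nat.mod_eq_of_lt h]
      simp only [Units.val_inv_eq_inv_val, inv_inv]
      field_simp
      linear_combination hAij
    · rw [if_neg h]
      obtain ⟨d, hd⟩ : ∃ d, i + j = n + d := ⟨i + j - n, by omega⟩
      have hdn : d < n := by omega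
      have hmod : (i + j) % n = d := by
        rw [hd, Nat.add_mod_left]; exact Nat.mod_eq_of_lt hdn
      have hcij : (c (i + j) : K) = (lam : K) * (c ((i + j) % n) : K) := by
        rw [hmod, hd, hB, hlam]; push_cast; ring
      rw [hcij] at hAij
      simp only [Units.val_inv_eq_inv_val, inv_inv]
      field_simp
      linear_combination hAij
  -- the constacyclic cocycle
  set αlam : G → G → Kˣ := fun x y => α x y * κ (x * y) * (κ x)⁻¹ * (κ y)⁻¹ with hαlam
  have hαlamval : ∀ x y : G, (αlam x y : K) =
      (α x y : K) * (κ (x * y) : K) * ((κ x : K))⁻¹ * ((κ y : K))⁻¹ := by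
    intro x y; rw [hαlam]; push_cast; ring
  refine ⟨lam, κ, hfixall _ (hfixc n) g, ?_, hfixκ, hMain, αlam, ?_, ?_⟩
  · -- κ 1 = 1
    rw [hκ]
    simp only []
    have : ind (1 : G) = 0 := by
      have := hindval 0 hn0
      simpa using this
    rw [this, hc0, inv_one]
  · -- αlam values
    intro i j hi hj
    have hcoe : (αlam (g ^ i) (g ^ j) : K) = ((if i + j < n then 1 else lam : Kˣ) : K) := by
      rw [hαlamval, ← pow_add, hMain i j hi hj]
      have h1 : ((κ (g ^ i) : K)) ≠ 0 := Units.ne_zero _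
      have h2 : ((κ (g ^ j) : K)) ≠ 0 := Units.ne_zero _
      have h3 : ((κ (g ^ (i + j)) : K)) ≠ 0 := Units.ne_zero _
      split_ifs with h
      · field_simp
        exact Units.val_one.symm
      · field_simp
    exact Units.ext hcoe
  · -- ring homomorphism property
    intro a b
    have hψ : ∀ (f : G → K) (x : G), psiMap id κ f x = f x * (κ x : K) := by
      intro f x
      simp [psiMap]
    funext x
    rw [hψ]
    simp only [tsMul, Finset.sum_mul, hψ]
    refine Finset.sum_congr rfl fun p _ => ?_
    split_ifs with h
    · rw [← h, map_mul, hΘκ, hαlamval]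
      have h1 : ((κ p.1 : K)) ≠ 0 := Units.ne_zero _
      have h2 : ((κ p.2 : K)) ≠ 0 := Units.ne_zero _
      field_simp
    · rw [zero_mul]
end

section
/- If C is a nonzero left ideal of the twisted skew group ring R = K[G,Θ,α], then |G| ≤ d(C) · dim_K C, where d(C) is the minimum Hamming distance of C and dim_K C is its dimension as a K-vector space. -/
open Finset

variable {K : Type*} {G : Type*}

lemma ts_translate_apply [Field K] [Group G] [Fintype G] [DecidableEq G]
    (Θ : G →* RingAut K) (α : G → G → Kˣ) (c : G → K) (g x : G) :
    tsMul Θ α (Pi.single g (1:K)) c x = Θ g (c (g⁻¹ * x)) * (α g (g⁻¹ * x) : K) := by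
  classical
  unfold tsMul
  rw [Finset.sum_eq_single (g, g⁻¹ * x)]
  · simp
  · rintro ⟨p1, p2⟩ _ hp
    by_cases h1 : p1 = g
    · have : p1 * p2 ≠ x := by
        intro h
        exact hp (by rw [Prod.mk.injEq]; exact ⟨h1, by rw [← h, h1]; group⟩)
      simp [this]
    · simp [Pi.single_apply, h1]
  · simp

lemma ts_translate_ne_zero [Field K] [Group G] [Fintype G] [DecidableEq G]
    (Θ : G →* RingAut K) (α : G → G → Kˣ) (c : G → K) (g x : G) :
    tsMul Θ α (Pi.single g (1:K)) c x ≠ 0 ↔ c (g⁻¹ * x) ≠ 0 := by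
  rw [ts_translate_apply]
  constructor
  · intro h hc; rw [hc] at h; simp at h
  · intro h hz
    rcases mul_eq_zero.1 hz with h1 | h1
    · exact h (by simpa using (map_eq_zero_iff _ (Θ g).injective).1 h1)
    · exact (α g (g⁻¹ * x)).ne_zero h1

lemma ts_translate_norm [Field K] [DecidableEq K] [Group G] [Fintype G] [DecidableEq G]
    (Θ : G →* RingAut K) (α : G → G → Kˣ) (c : G → K) (g : G) :
    hammingNorm (tsMul Θ α (Pi.single g (1:K)) c) = hammingNorm c := by
  classical
  unfold hammingNorm
  apply Finset.card_nbij' (fun x => g⁻¹ * x) (fun x => g * x)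
  · intro x hx
    simp only [mem_coe, mem_filter, mem_univ, true_and] at hx ⊢
    exact (ts_translate_ne_zero Θ α c g x).1 hx
  · intro x hx
    simp only [mem_coe, mem_filter, mem_univ, true_and] at hx ⊢
    exact (ts_translate_ne_zero Θ α c g (g * x)).2 (by simpa using hx)
  · intro x _; simp
  · intro x _; simp

/-- If `C ≠ 0` is a left ideal of `R = K[G,Θ,α]` with minimum
Hamming distance `d(C)`, then `|G| ≤ d(C) · dim_K C`. -/
theorem stmt8 [Field K] [Fintype K] [DecidableEq K] [Group G] [Fintype G] [DecidableEq G]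
    (Θ : G →* RingAut K) (α : G → G → Kˣ)
    (hnorm : ∀ g : G, α g 1 = 1 ∧ α 1 g = 1)
    (hcoc : ∀ g₁ g₂ g₃ : G, α g₁ (g₂ * g₃) * α g₂ g₃ = α (g₁ * g₂) g₃ * α g₁ g₂)
    (hstab : ∀ g x y : G, Θ g ((α x y : K)) = (α x y : K))
    (C : Submodule K (G → K))
    (hC : ∀ r : G → K, ∀ c ∈ C, tsMul Θ α r c ∈ C)
    (hC0 : C ≠ ⊥)
    (d : ℕ) (hd : IsLeast {w : ℕ | ∃ c ∈ C, c ≠ 0 ∧ hammingNorm c = w} d) :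
    Fintype.card G ≤ d * Module.finrank K C := by
  classical
  obtain ⟨⟨c, hcC, hc0, hcd⟩, _⟩ := hd
  obtain ⟨t0, ht0⟩ : ∃ t, c t ≠ 0 := Function.ne_iff.1 hc0
  set cov : Finset (G → K) → Finset G :=
    fun s => s.biUnion (fun v => univ.filter (fun x => v x ≠ 0)) with hcov_def
  have mem_cov : ∀ s x, x ∈ cov s ↔ ∃ v ∈ s, v x ≠ 0 := by
    intro s x; simp [hcov_def]
  set Inv : Finset (G → K) → Prop :=
    fun s => (↑s : Set (G → K)) ⊆ ↑C ∧
      LinearIndependent K ((↑) : (↑s : Set (G → K)) → (G → K)) ∧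
      ∀ v ∈ s, hammingNorm v ≤ d with hInv_def
  have key : ∀ n : ℕ, ∀ s : Finset (G → K), Inv s → ((univ : Finset G) \ cov s).card ≤ n →
      ∃ t : Finset (G → K), Inv t ∧ cov t = univ := by
    intro n
    induction n with
    | zero =>
      intro s hs h0
      refine ⟨s, hs, ?_⟩
      have : (univ : Finset G) \ cov s = ∅ := Finset.card_eq_zero.1 (Nat.le_zero.1 h0)
      exact Finset.eq_univ_of_forall (fun x => by
        by_contra hx
        exact absurd (Finset.mem_sdiff.2 ⟨mem_univ x, hx⟩) (by simp [this]))
    | succ n ih =>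
      intro s hs hle
      by_cases hcov : cov s = univ
      · exact ⟨s, hs, hcov⟩
      · obtain ⟨x, hx⟩ : ∃ x, x ∉ cov s := by
          by_contra h
          push_neg at h
          exact hcov (Finset.eq_univ_of_forall h)
        set g : G := x * t0⁻¹ with hg
        set c' : G → K := tsMul Θ α (Pi.single g (1:K)) c with hc'
        have hc'C : c' ∈ C := hC _ _ hcC
        have hginv : g⁻¹ * x = t0 := by rw [hg]; group
        have hc'x : c' x ≠ 0 := by
          rw [hc', ts_translate_ne_zero, hginv]; exact ht0
        have hc'd : hammingNorm c' ≤ d := by rw [hc', ts_translate_norm]; exact hcd.le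
        have hvx : ∀ v ∈ s, v x = 0 := by
          intro v hv
          by_contra h
          exact hx ((mem_cov s x).2 ⟨v, hv, h⟩)
        have hspan : c' ∉ Submodule.span K (↑s : Set (G → K)) := by
          intro hmem
          have hker : (↑s : Set (G → K)) ⊆ ↑(LinearMap.ker (LinearMap.proj x : (G → K) →ₗ[K] K)) := by
            intro v hv
            simpa using hvx v hv
          have := (Submodule.span_le.2 hker) hmem
          exact hc'x (by simpa using this)
        have hnotmem : c' ∉ s := fun h => hspan (Submodule.subset_span h)
        refine ih (insert c' s) ⟨?_, ?_, ?_⟩ ?_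
        · intro v hv
          rcases Finset.mem_insert.1 (by exact_mod_cast hv) with h | h
          · rw [h]; exact hc'C
          · exact hs.1 h
        · rw [Finset.coe_insert]
          exact LinearIndepOn.id_insert hs.2.1 hspan
        · intro v hv
          rcases Finset.mem_insert.1 hv with h | h
          · rw [h]; exact hc'd
          · exact hs.2.2 v h
        · have hsub : cov s ⊆ cov (insert c' s) :=
            Finset.biUnion_subset_biUnion_of_subset_left _ (Finset.subset_insert _ _)
          have hxin : x ∈ cov (insert c' s) :=
            (mem_cov _ x).2 ⟨c', Finset.mem_insert_self _ _, hc'x⟩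
          have hssub : (univ : Finset G) \ cov (insert c' s) ⊂ (univ : Finset G) \ cov s := by
            refine Finset.ssubset_iff_of_subset (Finset.sdiff_subset_sdiff le_rfl hsub) |>.2 ?_
            exact ⟨x, Finset.mem_sdiff.2 ⟨mem_univ x, hx⟩,
              fun h => (Finset.mem_sdiff.1 h).2 hxin⟩
          have := Finset.card_lt_card hssub
          omega
  have hInv0 : Inv ∅ := by
    refine ⟨by simp, ?_, by simp⟩
    rw [Finset.coe_empty]
    exact linearIndependent_empty_type
  obtain ⟨t, ⟨htC, htind, htnorm⟩, htcov⟩ :=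
    key (Fintype.card G) ∅ hInv0 (le_trans (Finset.card_le_univ _) (by simp))
  have hcard1 : Fintype.card G = (cov t).card := by rw [htcov]; simp
  have hcard2 : (cov t).card ≤ ∑ v ∈ t, hammingNorm v := by
    refine le_trans (Finset.card_biUnion_le) (le_of_eq ?_)
    rfl
  have hcard3 : ∑ v ∈ t, hammingNorm v ≤ d * t.card := by
    calc ∑ v ∈ t, hammingNorm v ≤ ∑ _v ∈ t, d := Finset.sum_le_sum htnorm
    _ = d * t.card := by rw [Finset.sum_const, smul_eq_mul, mul_comm]
  have htfin : t.card ≤ Module.finrank K C := by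
    have hind' : LinearIndependent K (fun v : (↑t : Set (G → K)) => (⟨(v : G → K), htC v.2⟩ : C)) := by
      apply LinearIndependent.of_comp C.subtype
      exact htind
    have := hind'.fintype_card_le_finrank
    simpa using this
  calc Fintype.card G = (cov t).card := hcard1
    _ ≤ ∑ v ∈ t, hammingNorm v := hcard2
    _ ≤ d * t.card := hcard3
    _ ≤ d * Module.finrank K C := Nat.mul_le_mul_left d htfin
end

section
/- Let K be a finite field and n ≥ 1. Every semilinear isometry of the Hamming space K^n is a semilinear monomial transformation: if f : K^n → K^n is an additive bijection, γ ∈ Aut(K) satisfies f(k·x) = γ(k)·f(x) for all k ∈ K and x ∈ K^n, and f preserves Hamming weight (equivalently, Hamming distance), then there exist a permutation π of {1,…,n} and nonzero scalars c_1,…,c_n ∈ K^* such that f(x)_i = c_i · γ(x_{π(i)}) for all x ∈ K^n and all i. -/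
lemma norm_one_single {n : ℕ} {K : Type*} [Field K] [DecidableEq K]
    (y : Fin n → K) (h : hammingNorm y = 1) :
    ∃ i, y i ≠ 0 ∧ y = Pi.single i (y i) := by
  unfold hammingNorm at h
  obtain ⟨i0, ha⟩ := Finset.card_eq_one.mp h
  have hmem : ∀ j : Fin n, y j ≠ 0 ↔ j = i0 := by
    intro j
    constructor
    · intro hj
      have hin : j ∈ ({i | y i ≠ 0} : Finset (Fin n)) := by simp [hj]
      rw [ha] at hin; simpa using hin
    · intro hj
      have hin : j ∈ ({i | y i ≠ 0} : Finset (Fin n)) := by rw [ha]; simp [hj]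
      simpa using hin
  refine ⟨i0, (hmem i0).mpr rfl, funext fun j => ?_⟩
  by_cases hj : j = i0
  · subst hj; simp
  · rw [Pi.single_eq_of_ne hj]
    by_contra h0
    exact hj ((hmem j).mp h0)

/-- Every semilinear isometry of the Hamming space `K^n` over a
finite field `K` is a semilinear monomial transformation: if `f : K^n → K^n` is an
additive bijection, `γ ∈ Aut(K)` satisfies `f(k·x) = γ(k)·f(x)`, and `f` preserves
the Hamming weight, then there are a permutation `π` of the coordinates and nonzero
scalars `c_i` with `f(x)_i = c_i · γ(x_{π(i)})`. -/
theorem stmt9 {K : Type*} [Field K] [Fintype K] [DecidableEq K]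
    (n : ℕ) (hn : 1 ≤ n)
    (f : (Fin n → K) → (Fin n → K)) (hbij : Function.Bijective f)
    (hadd : ∀ x y : Fin n → K, f (x + y) = f x + f y)
    (γ : RingAut K) (hsemi : ∀ (k : K) (x : Fin n → K), f (k • x) = γ k • f x)
    (hwt : ∀ x : Fin n → K, hammingNorm (f x) = hammingNorm x) :
    ∃ (π : Equiv.Perm (Fin n)) (c : Fin n → Kˣ),
      ∀ (x : Fin n → K) (i : Fin n), f x i = (c i : K) * γ (x (π i)) := by
  have hf0 : f 0 = 0 := by
    have h := hadd 0 0
    rw [add_zero] at h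
    exact (left_eq_add.mp h)
  have hone : ∀ j : Fin n, hammingNorm (f (Pi.single j 1)) = 1 := by
    intro j
    rw [hwt]
    unfold hammingNorm
    have hset : ({i | (Pi.single j 1 : Fin n → K) i ≠ 0} : Finset (Fin n)) = {j} := by
      ext i
      by_cases hi : i = j
      · subst hi; simp
      · simp [Pi.single_eq_of_ne hi, hi]
    rw [hset, Finset.card_singleton]
  choose σ hc hσ using fun j => norm_one_single _ (hone j)
  have hσinj : Function.Injective σ := by
    intro j j' he
    by_contra hne
    have hcj := hc j
    have hcj' := hc j'
    set cj : K := f (Pi.single j 1) (σ j) with hcjdef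
    set cj' : K := f (Pi.single j' 1) (σ j') with hcjdef'
    set k : K := γ.symm (-(cj / cj')) with hk
    have hγk : γ k = -(cj / cj') := by simp [hk]
    set w : Fin n → K := (Pi.single j 1 : Fin n → K) + k • (Pi.single j' 1 : Fin n → K)
      with hw
    have hfw : f w = 0 := by
      funext i
      have h1 : f w i = f (Pi.single j 1) i + γ k * f (Pi.single j' 1) i := by
        rw [hw, hadd, hsemi]
        simp
      have h2 : f (Pi.single j 1) i = (Pi.single (σ j) cj : Fin n → K) i := congrFun (hσ j) i
      have h3 : f (Pi.single j' 1) i = (Pi.single (σ j') cj' : Fin n → K) i := congrFun (hσ j') i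
      rw [h1, h2, h3, hγk]
      by_cases hi : i = σ j
      · subst hi
        rw [Pi.single_eq_same, ← he, Pi.single_eq_same]
        rw [Pi.zero_apply, neg_mul, div_mul_cancel₀ _ hcj', add_neg_cancel]
      · rw [Pi.single_eq_of_ne hi, Pi.single_eq_of_ne (he ▸ hi), Pi.zero_apply]
        ring
    have hz : w = 0 := by
      apply hbij.injective
      rw [hfw, hf0]
    have hev := congrFun hz j
    rw [hw, Pi.add_apply, Pi.single_eq_same, Pi.smul_apply,
      Pi.single_eq_of_ne hne, Pi.zero_apply] at hev
    simp at hev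
  have hσbij : Function.Bijective σ := Finite.injective_iff_bijective.mp hσinj
  let σe : Equiv.Perm (Fin n) := Equiv.ofBijective σ hσbij
  have happ : ∀ i, σ (σe.symm i) = i := fun i => σe.apply_symm_apply i
  refine ⟨σe.symm, fun i => Units.mk0 (f (Pi.single (σe.symm i) 1) i) ?_, ?_⟩
  · have h1 := hc (σe.symm i)
    rwa [happ i] at h1
  · intro x i
    have hx : x = ∑ j : Fin n, (x j) • (Pi.single j 1 : Fin n → K) := by
      conv_lhs => rw [← Finset.univ_sum_single x]
      refine Finset.sum_congr rfl fun j _ => ?_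
      rw [← Pi.single_smul, smul_eq_mul, mul_one]
    have hfx : f x = ∑ j : Fin n, γ (x j) • f (Pi.single j 1) := by
      let F : (Fin n → K) →+ (Fin n → K) := AddMonoidHom.mk' f hadd
      calc f x = F x := rfl
        _ = F (∑ j : Fin n, (x j) • (Pi.single j 1 : Fin n → K)) := by rw [← hx]
        _ = ∑ j : Fin n, F ((x j) • (Pi.single j 1 : Fin n → K)) := map_sum F _ _
        _ = ∑ j : Fin n, γ (x j) • f (Pi.single j 1) := by
            refine Finset.sum_congr rfl fun j _ => ?_
            exact hsemi (x j) (Pi.single j 1)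
    rw [hfx, Finset.sum_apply, Finset.sum_eq_single (σe.symm i)]
    · rw [Pi.smul_apply, smul_eq_mul, Units.val_mk0, mul_comm]
    · intro j _ hj
      rw [hσ j, Pi.smul_apply]
      have hne : i ≠ σ j := by
        intro hcon
        apply hj
        rw [hcon]
        exact (σe.symm_apply_apply j).symm
      rw [Pi.single_eq_of_ne hne, smul_zero]
    · intro h; exact absurd (Finset.mem_univ _) h
end

section
/- Let C be a left ideal of R = K[G,Θ,α], with coordinates indexed by G via the basis {ḡ : g ∈ G}. For λ ∈ K^* and g ∈ G define u_{λ,g} : R → R by u_{λ,g}(x) = (λḡ)·x, so that u_{λ,g}(Σ_h c_h h̄) = Σ_h λ·Θ(g)(c_h)·α(g,h)·(gh)‾. Then: (i) each u_{λ,g} maps C onto C, is additive, Hamming-weight-preserving, and satisfies u_{λ,g}(k·x) = Θ(g)(k)·u_{λ,g}(x) for all k ∈ K; (ii) u_{λ,g} ∘ u_{μ,h} = u_{λ·Θ(g)(μ)·α(g,h), gh}, so these maps form a group G̃ under composition; (iii) the coordinate permutation induced by u_{λ,g} is h ↦ gh, so the induced permutations act regularly on G; (iv) u_{λ,g} is K-linear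 and acts by coordinate-wise scaling only if g = 1, in which case it is the scalar multiplication by λ. -/
open Finset

variable {K : Type*} {G : Type*}

/-- The map `u_{λ,g} : x ↦ (λḡ)·x`, coefficientwise
`u_{λ,g}(Σ_h c_h h̄) = Σ_h λ·Θ(g)(c_h)·α(g,h)·(gh)‾`. -/
def uMap [Field K] [Group G] (Θ : G →* RingAut K) (α : G → G → Kˣ)
    (lam : K) (g : G) (x : G → K) : G → K :=
  fun k => lam * Θ g (x (g⁻¹ * k)) * (α g (g⁻¹ * k) : K)

section aux
set_option linter.unusedSectionVars false
variable [Field K] [Group G] [Fintype G] [DecidableEq G]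
variable (Θ : G →* RingAut K) (α : G → G → Kˣ)

lemma uMap_comp' (hcoc : ∀ g₁ g₂ g₃ : G, α g₁ (g₂ * g₃) * α g₂ g₃ = α (g₁ * g₂) g₃ * α g₁ g₂)
    (hstab : ∀ g x y : G, Θ g ((α x y : K)) = (α x y : K)) (lam mu : K) (g h : G) :
    uMap Θ α lam g ∘ uMap Θ α mu h = uMap Θ α (lam * Θ g mu * (α g h : K)) (g * h) := by
  funext x k
  have e : (g * h)⁻¹ * k = h⁻¹ * (g⁻¹ * k) := by group
  simp only [Function.comp, uMap, map_mul, hstab, e]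
  have hΘ : Θ g (Θ h (x (h⁻¹ * (g⁻¹ * k)))) = Θ (g*h) (x (h⁻¹ * (g⁻¹ * k))) := by
    rw [map_mul]; rfl
  have hα := congrArg (Units.val) (hcoc g h (h⁻¹ * (g⁻¹ * k)))
  push_cast at hα
  rw [show h * (h⁻¹ * (g⁻¹ * k)) = g⁻¹ * k by group] at hα
  rw [hΘ, ← map_mul Θ g h]
  linear_combination (lam * Θ g mu * Θ (g*h) (x (h⁻¹ * (g⁻¹ * k)))) * hα

lemma uMap_one' (hnorm : ∀ g : G, α g 1 = 1 ∧ α 1 g = 1) :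
    uMap Θ α (1 : K) (1 : G) = id := by
  funext x k
  have h1 : ((α 1 k : Kˣ) : K) = 1 := by rw [(hnorm _).2]; rfl
  simp [uMap, h1]

lemma uMap_eq_tsMul' (lam : K) (g : G) (x : G → K) :
    uMap Θ α lam g x = tsMul Θ α (fun h => if h = g then lam else 0) x := by
  funext k
  simp only [tsMul, uMap]
  rw [Finset.sum_eq_single (g, g⁻¹ * k)]
  · simp
  · rintro ⟨p1, p2⟩ - hp
    by_cases h1 : p1 * p2 = k
    · by_cases h2 : p1 = g
      · exfalso; apply hp; subst h2
        have : p2 = p1⁻¹ * k := by rw [← h1]; group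
        rw [this]
      · simp [h1, h2]
    · simp [h1]
  · simp

lemma uMap_inv_exists (lam : K) (g : G) (hlam : lam ≠ 0)
    (hcoc : ∀ g₁ g₂ g₃ : G, α g₁ (g₂ * g₃) * α g₂ g₃ = α (g₁ * g₂) g₃ * α g₁ g₂)
    (hstab : ∀ g x y : G, Θ g ((α x y : K)) = (α x y : K))
    (hnorm : ∀ g : G, α g 1 = 1 ∧ α 1 g = 1) :
    ∃ mu : K, uMap Θ α lam g ∘ uMap Θ α mu g⁻¹ = id := by
  refine ⟨Θ g⁻¹ (lam⁻¹ * ((α g g⁻¹)⁻¹ : Kˣ)), ?_⟩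
  rw [uMap_comp' Θ α hcoc hstab]
  have hθ : Θ g (Θ g⁻¹ (lam⁻¹ * ((α g g⁻¹)⁻¹ : Kˣ))) = lam⁻¹ * ((α g g⁻¹)⁻¹ : Kˣ) := by
    have e1 : Θ g (Θ g⁻¹ (lam⁻¹ * ((α g g⁻¹)⁻¹ : Kˣ))) = (Θ g * Θ g⁻¹) (lam⁻¹ * ((α g g⁻¹)⁻¹ : Kˣ)) := rfl
    rw [e1, ← map_mul Θ, mul_inv_cancel, map_one]; rfl
  rw [hθ]
  have : lam * (lam⁻¹ * ((α g g⁻¹)⁻¹ : Kˣ)) * ((α g g⁻¹ : Kˣ) : K) = 1 := by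
    field_simp
    exact Units.inv_mul _
  rw [this, mul_inv_cancel g]
  exact uMap_one' Θ α hnorm

lemma uMap_ne_zero_iff (lam : K) (g : G) (hlam : lam ≠ 0) (x : G → K) (k : G) :
    uMap Θ α lam g x k ≠ 0 ↔ x (g⁻¹ * k) ≠ 0 := by
  simp only [uMap, mul_ne_zero_iff, Units.ne_zero, and_true]
  rw [map_eq_zero_iff (Θ g) (Θ g).injective |>.ne]
  have := Units.ne_zero (α g (g⁻¹ * k))
  tauto

end aux

/-- For a left ideal `C` of `R = K[G,Θ,α]`, the maps `u_{λ,g}`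
(`λ ∈ K^*`, `g ∈ G`): (i) map `C` onto `C`, are additive, Hamming-weight-preserving
and `Θ(g)`-semilinear; (ii) compose by `u_{λ,g} ∘ u_{μ,h} = u_{λ·Θ(g)(μ)·α(g,h),gh}`,
are bijections, and `u_{1,1} = id`, so they form a group under composition;
(iii) permute the coordinates by `h ↦ gh` (sending basis vector `h̄` to
`λα(g,h)·(gh)‾`), hence the induced permutations act regularly on `G`;
(iv) `u_{λ,g}` acts by coordinatewise scaling only if `g = 1`, in which case it is
scalar multiplication by `λ`. -/
theorem stmt10 [Field K] [Fintype K] [DecidableEq K] [Group G] [Fintype G] [DecidableEq G]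
    (Θ : G →* RingAut K) (α : G → G → Kˣ)
    (hnorm : ∀ g : G, α g 1 = 1 ∧ α 1 g = 1)
    (hcoc : ∀ g₁ g₂ g₃ : G, α g₁ (g₂ * g₃) * α g₂ g₃ = α (g₁ * g₂) g₃ * α g₁ g₂)
    (hstab : ∀ g x y : G, Θ g ((α x y : K)) = (α x y : K))
    (C : Submodule K (G → K))
    (hC : ∀ r : G → K, ∀ c ∈ C, tsMul Θ α r c ∈ C) :
    (∀ (lam : K) (g : G) (x : G → K),
        uMap Θ α lam g x = tsMul Θ α (fun h => if h = g then lam else 0) x) ∧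
    (∀ (lam : K) (g : G), lam ≠ 0 → uMap Θ α lam g '' (C : Set (G → K)) = C) ∧
    (∀ (lam : K) (g : G) (x y : G → K),
        uMap Θ α lam g (x + y) = uMap Θ α lam g x + uMap Θ α lam g y) ∧
    (∀ (lam : K) (g : G) (x : G → K), lam ≠ 0 →
        hammingNorm (uMap Θ α lam g x) = hammingNorm x) ∧
    (∀ (lam : K) (g : G) (k : K) (x : G → K),
        uMap Θ α lam g (k • x) = Θ g k • uMap Θ α lam g x) ∧
    (∀ (lam mu : K) (g h : G),
        uMap Θ α lam g ∘ uMap Θ α mu h = uMap Θ α (lam * Θ g mu * (α g h : K)) (g * h)) ∧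
    (∀ (lam : K) (g : G), lam ≠ 0 → Function.Bijective (uMap Θ α lam g)) ∧
    (uMap Θ α (1 : K) (1 : G) = id) ∧
    (∀ (lam : K) (g h : G),
        uMap Θ α lam g (Pi.single h 1) = lam • ((α g h : K) • (Pi.single (g * h) 1 : G → K))) ∧
    (∀ (lam : K) (g : G), lam ≠ 0 →
        (∃ d : G → K, ∀ (x : G → K) (k : G), uMap Θ α lam g x k = d k * x k) →
          g = 1 ∧ ∀ x : G → K, uMap Θ α lam g x = lam • x) := by
  have memC : ∀ (lam : K) (g : G), ∀ c ∈ C, uMap Θ α lam g c ∈ C := by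
    intro lam g c hc
    rw [uMap_eq_tsMul']
    exact hC _ _ hc
  refine ⟨uMap_eq_tsMul' Θ α, ?_, ?_, ?_, ?_, uMap_comp' Θ α hcoc hstab, ?_, uMap_one' Θ α hnorm, ?_, ?_⟩
  · -- image C = C
    intro lam g hlam
    apply Set.Subset.antisymm
    · rintro - ⟨c, hc, rfl⟩
      exact memC lam g c hc
    · intro c hc
      obtain ⟨mu, hmu⟩ := uMap_inv_exists Θ α lam g hlam hcoc hstab hnorm
      exact ⟨uMap Θ α mu g⁻¹ c, memC mu g⁻¹ c hc,
        by rw [← Function.comp_apply (f := uMap Θ α lam g), hmu]; rfl⟩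
  · -- additivity
    intro lam g x y
    funext k
    simp only [uMap, Pi.add_apply, map_add]
    ring
  · -- hamming norm
    intro lam g x hlam
    simp only [hammingNorm]
    apply Finset.card_bij (fun k _ => g⁻¹ * k)
    · intro k hk
      simp only [mem_filter, mem_univ, true_and] at hk ⊢
      exact (uMap_ne_zero_iff Θ α lam g hlam x k).mp hk
    · intro a _ b _ hab
      exact mul_left_cancel hab
    · intro b hb
      refine ⟨g * b, ?_, by group⟩
      simp only [mem_filter, mem_univ, true_and] at hb ⊢
      rw [uMap_ne_zero_iff Θ α lam g hlam]
      rwa [inv_mul_cancel_left]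
  · -- semilinear
    intro lam g k x
    funext m
    simp only [uMap, Pi.smul_apply, smul_eq_mul, map_mul]
    ring
  · -- bijective
    intro lam g hlam
    constructor
    · intro x y hxy
      funext m
      have h := congrFun hxy (g * m)
      simp only [uMap, inv_mul_cancel_left] at h
      have h2 := mul_right_cancel₀ (Units.ne_zero (α g m) : ((α g m : Kˣ) : K) ≠ 0) h
      have h3 := mul_left_cancel₀ hlam h2
      exact (Θ g).injective h3
    · intro y
      obtain ⟨mu, hmu⟩ := uMap_inv_exists Θ α lam g hlam hcoc hstab hnorm
      exact ⟨uMap Θ α mu g⁻¹ y,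
        by rw [← Function.comp_apply (f := uMap Θ α lam g), hmu]; rfl⟩
  · -- basis vectors
    intro lam g h
    funext k
    by_cases hk : k = g * h
    · subst hk
      have e : g⁻¹ * (g * h) = h := by group
      simp [uMap, e, Pi.single_apply]
    · have e : g⁻¹ * k ≠ h := by
        intro h0; apply hk; rw [← h0]; group
      simp [uMap, Pi.single_apply, e, Ne.symm (hk ·.symm), hk]
  · -- diagonal only if g = 1
    intro lam g hlam ⟨d, hd⟩
    have hg : g = 1 := by
      by_contra hg
      have h := hd (Pi.single 1 1) g
      have e : g⁻¹ * g = (1 : G) := by group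
      rw [show uMap Θ α lam g (Pi.single 1 1) g = lam by
        simp [uMap, e, Pi.single_apply, (hnorm g).1]] at h
      rw [Pi.single_apply, if_neg hg, mul_zero] at h
      exact hlam h
    subst hg
    refine ⟨rfl, fun x => ?_⟩
    funext k
    have h1 : ((α 1 k : Kˣ) : K) = 1 := by rw [(hnorm _).2]; rfl
    simp [uMap, h1]
end

section
/- If C is a left ideal of the twisted skew group ring R = K[G,Θ,α], then the Euclidean dual of C equals the image of the right annihilator of C under the adjoint map: C^⊥ = {â : a ∈ Ann_r(C)}. -/
open Finset

variable {K : Type*} {G : Type*}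

lemma tsMul_apply [Field K] [Group G] [Fintype G] [DecidableEq G]
    (Θ : G →* RingAut K) (α : G → G → Kˣ) (a b : G → K) (x : G) :
    tsMul Θ α a b x = ∑ g : G, a g * Θ g (b (g⁻¹ * x)) * (α g (g⁻¹ * x) : K) := by
  rw [tsMul, Fintype.sum_prod_type]
  refine Finset.sum_congr rfl fun g _ => ?_
  rw [Finset.sum_eq_single (g⁻¹ * x)]
  · simp
  · intro h _ hh
    rw [if_neg]
    intro he
    exact hh (by rw [← he]; group)
  · simp

lemma theta_inv_apply_s12 [Field K] [Group G] (Θ : G →* RingAut K) (x : G) (z : K) :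
    Θ x (Θ x⁻¹ z) = z := by
  have : (Θ x * Θ x⁻¹) z = z := by
    rw [← map_mul, mul_inv_cancel, map_one]; rfl
  exact this

lemma theta_mul_apply [Field K] [Group G] (Θ : G →* RingAut K) (x y : G) (z : K) :
    (Θ x * Θ y) z = Θ x (Θ y z) := rfl

lemma alpha_inv_symm [Field K] [Group G] (α : G → G → Kˣ)
    (hnorm : ∀ g : G, α g 1 = 1 ∧ α 1 g = 1)
    (hcoc : ∀ g₁ g₂ g₃ : G, α g₁ (g₂ * g₃) * α g₂ g₃ = α (g₁ * g₂) g₃ * α g₁ g₂)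
    (g : G) : α g⁻¹ g = α g g⁻¹ := by
  have h := hcoc g g⁻¹ g
  simpa [inv_mul_cancel, mul_inv_cancel, (hnorm g).1, (hnorm g).2] using h

lemma alpha_key [Field K] [Group G] (α : G → G → Kˣ)
    (hnorm : ∀ g : G, α g 1 = 1 ∧ α 1 g = 1)
    (hcoc : ∀ g₁ g₂ g₃ : G, α g₁ (g₂ * g₃) * α g₂ g₃ = α (g₁ * g₂) g₃ * α g₁ g₂)
    (g p : G) :
    α p (p⁻¹ * g⁻¹) * α g g⁻¹ = α g p * α (p⁻¹ * g⁻¹) (g * p) := by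
  have h := hcoc g p (p⁻¹ * g⁻¹)
  have h2 : p * (p⁻¹ * g⁻¹) = g⁻¹ := by group
  rw [h2] at h
  have h3 : α (p⁻¹ * g⁻¹) (g * p) = α (g * p) (p⁻¹ * g⁻¹) := by
    have := alpha_inv_symm α hnorm hcoc (g * p)
    rwa [mul_inv_rev] at this
  rw [h3, mul_comm (α p _) (α g g⁻¹), h, mul_comm]

/-- The pairing lemma: `⟨c, â⟩ = (c·a)(1)`. -/
lemma pairA [Field K] [Group G] [Fintype G] [DecidableEq G]
    (Θ : G →* RingAut K) (α : G → G → Kˣ)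
    (hnorm : ∀ g : G, α g 1 = 1 ∧ α 1 g = 1)
    (hcoc : ∀ g₁ g₂ g₃ : G, α g₁ (g₂ * g₃) * α g₂ g₃ = α (g₁ * g₂) g₃ * α g₁ g₂)
    (c a : G → K) :
    ∑ x : G, c x * tsAdj Θ α a x = tsMul Θ α c a 1 := by
  rw [tsMul_apply]
  refine Finset.sum_congr rfl fun g _ => ?_
  simp only [tsAdj, mul_one]
  rw [show ((α g⁻¹ g : Kˣ) : K) = ((α g g⁻¹ : Kˣ) : K) from
    congrArg _ (alpha_inv_symm α hnorm hcoc g)]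
  ring

/-- `⟨ḡ·c, â⟩ = Θ(g)((c·a)(g⁻¹))·α(g,g⁻¹)`. -/
lemma pairB [Field K] [Group G] [Fintype G] [DecidableEq G]
    (Θ : G →* RingAut K) (α : G → G → Kˣ)
    (hnorm : ∀ g : G, α g 1 = 1 ∧ α 1 g = 1)
    (hcoc : ∀ g₁ g₂ g₃ : G, α g₁ (g₂ * g₃) * α g₂ g₃ = α (g₁ * g₂) g₃ * α g₁ g₂)
    (hstab : ∀ g x y : G, Θ g ((α x y : K)) = (α x y : K))
    (c a : G → K) (g : G) :
    ∑ x : G, tsMul Θ α (fun y => if y = g then (1 : K) else 0) c x * tsAdj Θ α a x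
      = Θ g (tsMul Θ α c a g⁻¹) * (α g g⁻¹ : K) := by
  have hδ : ∀ x : G, tsMul Θ α (fun y => if y = g then (1 : K) else 0) c x
      = Θ g (c (g⁻¹ * x)) * (α g (g⁻¹ * x) : K) := by
    intro x
    rw [tsMul_apply, Finset.sum_eq_single g]
    · simp
    · intro h _ hh; simp [hh]
    · simp
  simp only [hδ, tsMul_apply, map_sum, Finset.sum_mul]
  refine (Fintype.sum_equiv (Equiv.mulLeft g) _ _ fun p => ?_).symm
  simp only [Equiv.coe_mulLeft, map_mul, inv_mul_cancel_left, mul_inv_rev, hstab,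
    theta_mul_apply, tsAdj]
  have hk : ((α p (p⁻¹ * g⁻¹) : Kˣ) : K) * ((α g g⁻¹ : Kˣ) : K)
      = ((α g p : Kˣ) : K) * ((α (p⁻¹ * g⁻¹) (g * p) : Kˣ) : K) := by
    exact_mod_cast congrArg Units.val (alpha_key α hnorm hcoc g p)
  linear_combination (Θ g (c p) * Θ g (Θ p (a (p⁻¹ * g⁻¹)))) * hk

/-- **MacWilliams-type duality.** If `C` is a left ideal of
`R = K[G,Θ,α]`, then the Euclidean dual of `C` equals the image of the right
annihilator of `C` under the adjoint map: `C^⊥ = {â : a ∈ Ann_r(C)}`. -/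
theorem stmt12 [Field K] [Fintype K] [Group G] [Fintype G] [DecidableEq G]
    (Θ : G →* RingAut K) (α : G → G → Kˣ)
    (hnorm : ∀ g : G, α g 1 = 1 ∧ α 1 g = 1)
    (hcoc : ∀ g₁ g₂ g₃ : G, α g₁ (g₂ * g₃) * α g₂ g₃ = α (g₁ * g₂) g₃ * α g₁ g₂)
    (hstab : ∀ g x y : G, Θ g ((α x y : K)) = (α x y : K))
    (C : Submodule K (G → K))
    (hC : ∀ r : G → K, ∀ c ∈ C, tsMul Θ α r c ∈ C) :
    {b : G → K | ∀ c ∈ C, ∑ g : G, c g * b g = 0} =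
      tsAdj Θ α '' {a : G → K | ∀ c ∈ C, tsMul Θ α c a = 0} := by
  ext b
  constructor
  · intro hb
    set a : G → K := fun y => Θ y (b y⁻¹ * (((α y⁻¹ y : Kˣ) : K))⁻¹) with ha_def
    have hba : tsAdj Θ α a = b := by
      funext x
      simp only [tsAdj, ha_def, inv_inv, theta_inv_apply_s12]
      rw [show ((α x⁻¹ x : Kˣ) : K) = ((α x x⁻¹ : Kˣ) : K) from
        congrArg _ (alpha_inv_symm α hnorm hcoc x)] at *
      rw [mul_assoc, inv_mul_cancel₀ (Units.ne_zero _), mul_one]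
    refine ⟨a, ?_, hba⟩
    intro c hc
    funext y
    have h0 := hb (tsMul Θ α (fun z => if z = y⁻¹ then (1 : K) else 0) c) (hC _ c hc)
    rw [← hba, pairB Θ α hnorm hcoc hstab c a y⁻¹, inv_inv] at h0
    have h1 : Θ y⁻¹ (tsMul Θ α c a y) = 0 :=
      (mul_eq_zero.mp h0).resolve_right (Units.ne_zero _)
    have h2 : Θ y⁻¹ (tsMul Θ α c a y) = Θ y⁻¹ 0 := by rw [map_zero]; exact h1
    simpa using (Θ y⁻¹).injective h2
  · rintro ⟨a, ha, rfl⟩ c hc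
    rw [pairA Θ α hnorm hcoc c a, ha c hc]
    rfl
end

section
/- Suppose the normalized 2-cocycle α satisfies α = α⁻¹, i.e. α(x,y)² = 1 for all x,y ∈ G. Then the Euclidean bilinear form on R = K[G,Θ,α] is adjoint-compatible: ⟨a·b, c⟩ = ⟨a, c·b̂⟩ for all a, b, c ∈ R. -/
open Finset

variable {K : Type*} {G : Type*}

/-- If `α = α⁻¹` (i.e. `α(x,y)² = 1` for all `x,y ∈ G`), then the
Euclidean bilinear form on `R = K[G,Θ,α]` is adjoint-compatible:
`⟨a·b, c⟩ = ⟨a, c·b̂⟩` for all `a, b, c ∈ R`. -/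
theorem stmt14 [Field K] [Fintype K] [Group G] [Fintype G] [DecidableEq G]
    (Θ : G →* RingAut K) (α : G → G → Kˣ)
    (hnorm : ∀ g : G, α g 1 = 1 ∧ α 1 g = 1)
    (hcoc : ∀ g₁ g₂ g₃ : G, α g₁ (g₂ * g₃) * α g₂ g₃ = α (g₁ * g₂) g₃ * α g₁ g₂)
    (hstab : ∀ g x y : G, Θ g ((α x y : K)) = (α x y : K))
    (hα2 : ∀ x y : G, (α x y : K) ^ 2 = 1) :
    ∀ a b c : G → K,
      ∑ g : G, tsMul Θ α a b g * c g = ∑ g : G, a g * tsMul Θ α c (tsAdj Θ α b) g := by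
  intro a b c
  have key : ∀ x y : G, (α x y : K) = (α y y⁻¹ : K) * (α (x * y) y⁻¹ : K) := by
    intro x y
    have h := congrArg (fun u : Kˣ => (u : K)) (hcoc x y y⁻¹)
    simp only [mul_inv_cancel, (hnorm x).1, Units.val_mul, Units.val_one, one_mul] at h
    have : (α x y : K) = ((α (x * y) y⁻¹ : K) ^ 2) * α x y := by rw [hα2, one_mul]
    rw [this, h]; ring
  have L : ∑ g : G, tsMul Θ α a b g * c g
      = ∑ p : G × G, a p.1 * Θ p.1 (b p.2) * (α p.1 p.2 : K) * c (p.1 * p.2) := by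
    simp only [tsMul, Finset.sum_mul, ite_mul, zero_mul]
    rw [Finset.sum_comm]
    refine Finset.sum_congr rfl fun p _ => ?_
    rw [Finset.sum_ite_eq]
    simp
  have R : ∑ g : G, a g * tsMul Θ α c (tsAdj Θ α b) g
      = ∑ q : G × G, a (q.1 * q.2) *
          (c q.1 * Θ q.1 (Θ q.2 (b q.2⁻¹) * (α q.2⁻¹ q.2 : K)) * (α q.1 q.2 : K)) := by
    simp only [tsMul, tsAdj, Finset.mul_sum, mul_ite, mul_zero]
    rw [Finset.sum_comm]
    refine Finset.sum_congr rfl fun q _ => ?_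
    rw [Finset.sum_ite_eq]
    simp [mul_assoc]
  rw [L, R]
  refine Fintype.sum_equiv
    ⟨fun p => (p.1 * p.2, p.2⁻¹), fun p => (p.1 * p.2, p.2⁻¹),
      fun p => by simp, fun p => by simp⟩ _ _ fun p => ?_
  simp only [Equiv.coe_fn_mk, inv_inv, mul_inv_cancel_right, map_mul, hstab]
  have h1 : ∀ v : K, (Θ p.2) ((Θ p.2⁻¹) v) = v := by
    intro v
    have h2 : Θ p.2 * Θ p.2⁻¹ = 1 := by rw [← map_mul, mul_inv_cancel, map_one]
    calc (Θ p.2) ((Θ p.2⁻¹) v) = (Θ p.2 * Θ p.2⁻¹) v := rfl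
      _ = v := by rw [h2]; rfl
  simp only [show ∀ v : K, (Θ p.1 * Θ p.2) v = Θ p.1 (Θ p.2 v) from fun _ => rfl, h1, hstab]
  rw [key p.1 p.2]
  ring
end
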